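/- Let G ⊆ ℂ×ℂ be open and connected and let ω₁, ω₂ : ℂ×ℂ → ℂ×ℂ be continuous on G. For a continuously differentiable curve p = (a,b) : [r,s] → G define I(p) = ∫_r^s (ω₁(p(t)) ⊙ (a′(t),0) + ω₂(p(t)) ⊙ (b′(t),0)) dt. Then I(p) = 0 for every closed continuously differentiable curve p in G if and only if there exists Ω : ℂ×ℂ → ℂ×ℂ such that at every point (a,b) ∈ G both complex components of Ω are complex differentiable in the first variable with partial derivative ∂Ω/∂a (a,b) = ω₁(a,b) (componentwise), and complex differentiable in the second variable with ∂Ω/∂b (a,b) = ω₂(a,b) (componentwise). -/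

import Mathlib

open Set intervalIntegral
open scoped Classical

noncomputable section

/-- Bicomplex multiplication on ℂ × ℂ. -/
def bmul (p q : ℂ × ℂ) : ℂ × ℂ := (p.1 * q.1 - p.2 * q.2, p.2 * q.1 + p.1 * q.2)

lemma bmul_eq (w : ℂ × ℂ) (c : ℂ) : bmul w (c, 0) = c • w := by
  simp [bmul, Prod.ext_iff, mul_comm]

/-- smooth ramp -/
def sphi (t : ℝ) : ℝ := 3 * t ^ 2 - 2 * t ^ 3

def sphi' (t : ℝ) : ℝ := 6 * t - 6 * t ^ 2

lemma sphi_hasDeriv (t : ℝ) : HasDerivAt sphi (sphi' t) t := by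
  have h := (((hasDerivAt_pow 2 t).const_mul 3).sub ((hasDerivAt_pow 3 t).const_mul 2))
  exact h.congr_deriv (by unfold sphi'; ring)

lemma sphi_cont : Continuous sphi' := by unfold sphi'; fun_prop

@[simp] lemma sphi_zero : sphi 0 = 0 := by simp [sphi]
@[simp] lemma sphi_one : sphi 1 = 1 := by norm_num [sphi]
@[simp] lemma sphi'_zero : sphi' 0 = 0 := by simp [sphi']
@[simp] lemma sphi'_one : sphi' 1 = 0 := by norm_num [sphi']

lemma sphi_mem {t : ℝ} (ht : t ∈ Icc (0:ℝ) 1) : sphi t ∈ Icc (0:ℝ) 1 := by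
  obtain ⟨h0, h1⟩ := ht
  unfold sphi
  refine ⟨by nlinarith, ?_⟩
  nlinarith [mul_nonneg (sq_nonneg (1-t)) (by linarith : (0:ℝ) ≤ 1+2*t)]

lemma sphi'_nonneg {t : ℝ} (ht : t ∈ Icc (0:ℝ) 1) : 0 ≤ sphi' t := by
  obtain ⟨h0, h1⟩ := ht; unfold sphi'; nlinarith

lemma sphi'_le_two {t : ℝ} (ht : t ∈ Icc (0:ℝ) 1) : sphi' t ≤ 2 := by
  obtain ⟨h0, h1⟩ := ht; unfold sphi'; nlinarith

lemma sphi'_integral : ∫ t in (0:ℝ)..1, sphi' t = 1 := by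
  rw [intervalIntegral.integral_eq_sub_of_hasDerivAt
    (fun t _ => sphi_hasDeriv t) (sphi_cont.intervalIntegrable 0 1)]
  simp

/-- A good C¹ path in `G` from `x` to `y`, parametrized on `[0,1]`, with vanishing
derivative at the endpoints. -/
structure GP (G : Set (ℂ × ℂ)) (x y : ℂ × ℂ) where
  f : ℝ → ℂ × ℂ
  d : ℝ → ℂ × ℂ
  hderiv : ∀ t ∈ Icc (0:ℝ) 1, HasDerivAt f (d t) t
  hcont : ContinuousOn d (Icc 0 1)
  hmem : ∀ t ∈ Icc (0:ℝ) 1, f t ∈ G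
  h0 : f 0 = x
  h1 : f 1 = y
  hd0 : d 0 = 0
  hd1 : d 1 = 0

variable {G : Set (ℂ × ℂ)} {x y z : ℂ × ℂ} (ω₁ ω₂ : ℂ × ℂ → ℂ × ℂ)

/-- the integrand of the line integral -/
def itg (f d : ℝ → ℂ × ℂ) (t : ℝ) : ℂ × ℂ := (d t).1 • ω₁ (f t) + (d t).2 • ω₂ (f t)

/-- the line integral -/
def pI (f d : ℝ → ℂ × ℂ) : ℂ × ℂ := ∫ t in (0:ℝ)..1, itg ω₁ ω₂ f d t

lemma GP.contf (g : GP G x y) : ContinuousOn g.f (Icc 0 1) :=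
  fun t ht => (g.hderiv t ht).continuousAt.continuousWithinAt

lemma GP.itg_cont (g : GP G x y) (hc₁ : ContinuousOn ω₁ G) (hc₂ : ContinuousOn ω₂ G) :
    ContinuousOn (itg ω₁ ω₂ g.f g.d) (Icc 0 1) := by
  have hωf : ContinuousOn (fun t => ω₁ (g.f t)) (Icc 0 1) := hc₁.comp g.contf g.hmem
  have hωf2 : ContinuousOn (fun t => ω₂ (g.f t)) (Icc 0 1) := hc₂.comp g.contf g.hmem
  exact ((continuous_fst.comp_continuousOn g.hcont).smul hωf).add
    ((continuous_snd.comp_continuousOn g.hcont).smul hωf2)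

def c01 (u : ℝ) : ℝ := min (max u 0) 1

lemma c01_mem (u : ℝ) : c01 u ∈ Icc (0:ℝ) 1 :=
  ⟨le_min (le_max_right u 0) zero_le_one, min_le_right _ _⟩

lemma c01_eq {u : ℝ} (h0 : 0 ≤ u) (h1 : u ≤ 1) : c01 u = u := by
  rw [c01, max_eq_left h0, min_eq_left h1]

@[fun_prop]
lemma c01_cont : Continuous c01 := by unfold c01; fun_prop

/-- constant path -/
def GP.refl (x : ℂ × ℂ) (hx : x ∈ G) : GP G x x where
  f := fun _ => x
  d := fun _ => 0
  hderiv := fun t _ => hasDerivAt_const t x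
  hcont := continuousOn_const
  hmem := fun t _ => hx
  h0 := rfl
  h1 := rfl
  hd0 := rfl
  hd1 := rfl

/-- a smoothly reparametrized segment -/
def GP.seg (q v : ℂ × ℂ) (hseg : ∀ t ∈ Icc (0:ℝ) 1, q + t • v ∈ G) : GP G q (q + v) where
  f := fun t => q + sphi t • v
  d := fun t => sphi' t • v
  hderiv := fun t _ => by
    simpa [Pi.add_def] using (hasDerivAt_const t q).add ((sphi_hasDeriv t).smul_const v)
  hcont := (sphi_cont.continuousOn).smul continuousOn_const
  hmem := fun t ht => hseg (sphi t) (sphi_mem ht)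
  h0 := by simp
  h1 := by simp
  hd0 := by simp
  hd1 := by simp

/-- reverse path -/
def GP.symm (g : GP G x y) : GP G y x where
  f := fun t => g.f (1 - t)
  d := fun t => -g.d (1 - t)
  hderiv := by
    intro t ht
    have h1t : (1:ℝ) - t ∈ Icc (0:ℝ) 1 := ⟨by linarith [ht.2], by linarith [ht.1]⟩
    have := HasDerivAt.scomp t (g.hderiv (1 - t) h1t) ((hasDerivAt_id t).const_sub 1)
    simpa [Function.comp_def] using this
  hcont := by
    have : ContinuousOn (fun t : ℝ => g.d (1 - t)) (Icc 0 1) := by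
      apply g.hcont.comp (by fun_prop)
      intro t ht; exact ⟨by linarith [ht.2], by linarith [ht.1]⟩
    exact this.neg
  hmem := fun t ht => g.hmem (1 - t) ⟨by linarith [ht.2], by linarith [ht.1]⟩
  h0 := by simpa using g.h1
  h1 := by simpa using g.h0
  hd0 := by simpa using g.hd1
  hd1 := by simpa using g.hd0

/-- concatenation -/
def GP.trans (g₁ : GP G x y) (g₂ : GP G y z) : GP G x z where
  f := fun t => if t ≤ 1/2 then g₁.f (min (2*t) 1) else g₂.f (2*t - 1)
  d := fun t => if t ≤ 1/2 then (2:ℝ) • g₁.d (c01 (2*t)) else (2:ℝ) • g₂.d (c01 (2*t-1))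
  hderiv := by
    intro t ht
    rcases lt_trichotomy t (1/2) with h | h | h
    · have key : HasDerivAt (fun u => g₁.f (2*u)) ((2:ℝ) • g₁.d (2*t)) t := by
        have := HasDerivAt.scomp t (g₁.hderiv (2*t) ⟨by linarith [ht.1], by linarith⟩)
          ((hasDerivAt_id t).const_mul 2)
        simpa [Function.comp_def] using this
      have hev : (fun u => if u ≤ 1/2 then g₁.f (min (2*u) 1) else g₂.f (2*u - 1))
          =ᶠ[nhds t] (fun u => g₁.f (2*u)) := by
        filter_upwards [Iio_mem_nhds h] with u hu
        rw [if_pos (le_of_lt hu), min_eq_left (by simp only [mem_Iio] at hu; linarith)]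
      show HasDerivAt (fun u => if u ≤ 1/2 then g₁.f (min (2*u) 1) else g₂.f (2*u - 1))
        (if t ≤ 1/2 then (2:ℝ) • g₁.d (c01 (2*t)) else (2:ℝ) • g₂.d (c01 (2*t-1))) t
      rw [if_pos (le_of_lt h), c01_eq (by linarith [ht.1]) (by linarith)]
      exact key.congr_of_eventuallyEq hev
    · subst h
      have h21 : (2:ℝ) * (1/2) = 1 := by norm_num
      have hL : HasDerivAt (fun u => g₁.f (2*u)) ((2:ℝ) • g₁.d 1) (1/2) := by
        have := HasDerivAt.scomp (1/2 : ℝ) (g₁.hderiv (2*(1/2)) (by norm_num))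
          ((hasDerivAt_id (1/2 : ℝ)).const_mul 2)
        simpa [h21, Function.comp_def] using this
      have hR : HasDerivAt (fun u => g₂.f (2*u - 1)) ((2:ℝ) • g₂.d 0) (1/2) := by
        have h210 : (2:ℝ) * (1/2) - 1 = 0 := by norm_num
        have := HasDerivAt.scomp (1/2 : ℝ) (g₂.hderiv (2*(1/2) - 1) (by norm_num))
          (((hasDerivAt_id (1/2 : ℝ)).const_mul 2).sub_const 1)
        simpa [h210, Function.comp_def] using this
      have hL' : HasDerivWithinAt (fun u => if u ≤ 1/2 then g₁.f (min (2*u) 1)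
          else g₂.f (2*u - 1)) 0 (Iic (1/2)) (1/2) := by
        rw [← show ((2:ℝ) • g₁.d 1) = 0 by rw [g₁.hd1]; simp]
        apply hL.hasDerivWithinAt.congr
        · intro u hu
          simp only [mem_Iic] at hu
          rw [if_pos hu, min_def]
          split_ifs with h2
          · rfl
          · push_neg at h2
            have : (2:ℝ)*u = 1 := le_antisymm (by linarith) (le_of_lt h2)
            rw [this]
        · norm_num
      have hR' : HasDerivWithinAt (fun u => if u ≤ 1/2 then g₁.f (min (2*u) 1)
          else g₂.f (2*u - 1)) 0 (Ici (1/2)) (1/2) := by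
        rw [← show ((2:ℝ) • g₂.d 0) = 0 by rw [g₂.hd0]; simp]
        apply hR.hasDerivWithinAt.congr
        · intro u hu
          simp only [mem_Ici] at hu
          rcases eq_or_lt_of_le hu with h2 | h2
          · rw [← h2]
            norm_num
            rw [g₁.h1, g₂.h0]
          · rw [if_neg (not_le.mpr h2)]
        · norm_num
          rw [g₁.h1, g₂.h0]
      have hU := hL'.union hR'
      rw [Iic_union_Ici, hasDerivWithinAt_univ] at hU
      show HasDerivAt (fun u => if u ≤ 1/2 then g₁.f (min (2*u) 1) else g₂.f (2*u - 1))
        (if (1/2:ℝ) ≤ 1/2 then (2:ℝ) • g₁.d (c01 (2*(1/2))) else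
          (2:ℝ) • g₂.d (c01 (2*(1/2)-1))) (1/2)
      rw [if_pos le_rfl, h21, c01_eq zero_le_one le_rfl, g₁.hd1]
      simpa using hU
    · have key : HasDerivAt (fun u => g₂.f (2*u - 1)) ((2:ℝ) • g₂.d (2*t - 1)) t := by
        have := HasDerivAt.scomp t (g₂.hderiv (2*t - 1) ⟨by linarith, by linarith [ht.2]⟩)
          (((hasDerivAt_id t).const_mul 2).sub_const 1)
        simpa [Function.comp_def] using this
      have hev : (fun u => if u ≤ 1/2 then g₁.f (min (2*u) 1) else g₂.f (2*u - 1))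
          =ᶠ[nhds t] (fun u => g₂.f (2*u - 1)) := by
        filter_upwards [Ioi_mem_nhds h] with u hu
        rw [if_neg (not_le.mpr hu)]
      show HasDerivAt (fun u => if u ≤ 1/2 then g₁.f (min (2*u) 1) else g₂.f (2*u - 1))
        (if t ≤ 1/2 then (2:ℝ) • g₁.d (c01 (2*t)) else (2:ℝ) • g₂.d (c01 (2*t-1))) t
      rw [if_neg (not_le.mpr h), c01_eq (by linarith) (by linarith [ht.2])]
      exact key.congr_of_eventuallyEq hev
  hcont := by
    have b1 : Continuous (fun t : ℝ => (2:ℝ) • g₁.d (c01 (2*t))) := by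
      exact (g₁.hcont.comp_continuous (f := fun t : ℝ => c01 (2*t)) (by fun_prop) (fun u => c01_mem _)).const_smul (2:ℝ)
    have b2 : Continuous (fun t : ℝ => (2:ℝ) • g₂.d (c01 (2*t-1))) := by
      exact (g₂.hcont.comp_continuous (f := fun t : ℝ => c01 (2*t-1)) (by fun_prop) (fun u => c01_mem _)).const_smul (2:ℝ)
    apply Continuous.continuousOn
    apply continuous_if_le continuous_id continuous_const b1.continuousOn b2.continuousOn
    intro u hu
    simp only [id] at hu
    subst hu
    have e1 : c01 (2*(1/2:ℝ)) = 1 := by rw [show (2:ℝ)*(1/2) = 1 by norm_num]; exact c01_eq zero_le_one le_rfl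
    have e2 : c01 (2*(1/2:ℝ)-1) = 0 := by rw [show (2:ℝ)*(1/2)-1 = 0 by norm_num]; exact c01_eq le_rfl zero_le_one
    rw [e1, e2, g₁.hd1, g₂.hd0]
  hmem := by
    intro t ht
    show (if t ≤ 1/2 then g₁.f (min (2*t) 1) else g₂.f (2*t - 1)) ∈ G
    by_cases h : t ≤ 1/2
    · rw [if_pos h]
      exact g₁.hmem _ ⟨le_min (by linarith [ht.1]) zero_le_one, min_le_right _ _⟩
    · push_neg at h
      rw [if_neg (not_le.mpr h)]
      exact g₂.hmem _ ⟨by linarith, by linarith [ht.2]⟩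
  h0 := by norm_num [g₁.h0]
  h1 := by norm_num [g₂.h1]
  hd0 := by
    show (if (0:ℝ) ≤ 1/2 then (2:ℝ) • g₁.d (c01 (2*0)) else (2:ℝ) • g₂.d (c01 (2*0-1))) = 0
    rw [if_pos (by norm_num), show (2:ℝ)*0 = 0 by norm_num, c01_eq le_rfl zero_le_one, g₁.hd0]
    simp
  hd1 := by
    show (if (1:ℝ) ≤ 1/2 then (2:ℝ) • g₁.d (c01 (2*1)) else (2:ℝ) • g₂.d (c01 (2*1-1))) = 0
    rw [if_neg (by norm_num), show (2:ℝ)*1-1 = 1 by norm_num, c01_eq zero_le_one le_rfl, g₂.hd1]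
    simp

lemma pI_symm (g : GP G x y) :
    pI ω₁ ω₂ g.symm.f g.symm.d = - pI ω₁ ω₂ g.f g.d := by
  have hpt : ∀ t, itg ω₁ ω₂ g.symm.f g.symm.d t = -(itg ω₁ ω₂ g.f g.d (1-t)) := by
    intro t
    simp [itg, GP.symm, neg_add]
    abel
  unfold pI
  simp only [hpt]
  rw [intervalIntegral.integral_neg,
    intervalIntegral.integral_comp_sub_left (fun t => itg ω₁ ω₂ g.f g.d t) 1]
  norm_num

lemma pI_trans (hc₁ : ContinuousOn ω₁ G) (hc₂ : ContinuousOn ω₂ G)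
    (g₁ : GP G x y) (g₂ : GP G y z) :
    pI ω₁ ω₂ (g₁.trans g₂).f (g₁.trans g₂).d
      = pI ω₁ ω₂ g₁.f g₁.d + pI ω₁ ω₂ g₂.f g₂.d := by
  have hcT := (g₁.trans g₂).itg_cont ω₁ ω₂ hc₁ hc₂
  have i1 : IntervalIntegrable (itg ω₁ ω₂ (g₁.trans g₂).f (g₁.trans g₂).d)
      MeasureTheory.volume 0 (1/2) := by
    apply ContinuousOn.intervalIntegrable
    apply hcT.mono
    rw [uIcc_of_le (by norm_num)]
    exact Icc_subset_Icc le_rfl (by norm_num)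
  have i2 : IntervalIntegrable (itg ω₁ ω₂ (g₁.trans g₂).f (g₁.trans g₂).d)
      MeasureTheory.volume (1/2) 1 := by
    apply ContinuousOn.intervalIntegrable
    apply hcT.mono
    rw [uIcc_of_le (by norm_num)]
    exact Icc_subset_Icc (by norm_num) le_rfl
  have e1 : (∫ t in (0:ℝ)..(1/2), itg ω₁ ω₂ (g₁.trans g₂).f (g₁.trans g₂).d t)
      = pI ω₁ ω₂ g₁.f g₁.d := by
    have hpt : EqOn (itg ω₁ ω₂ (g₁.trans g₂).f (g₁.trans g₂).d)
        (fun t => (2:ℝ) • itg ω₁ ω₂ g₁.f g₁.d (2*t)) (uIcc (0:ℝ) (1/2)) := by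
      intro t ht
      rw [uIcc_of_le (by norm_num)] at ht
      simp only [itg, GP.trans]
      rw [if_pos ht.2, if_pos ht.2, c01_eq (by linarith [ht.1]) (by linarith [ht.2]),
        min_eq_left (by linarith [ht.2])]
      simp only [Prod.smul_fst, Prod.smul_snd, smul_assoc, smul_add]
    rw [intervalIntegral.integral_congr hpt, intervalIntegral.integral_smul,
      intervalIntegral.integral_comp_mul_left (fun t => itg ω₁ ω₂ g₁.f g₁.d t) two_ne_zero]
    norm_num [smul_smul, pI]
  have e2 : (∫ t in (1/2:ℝ)..1, itg ω₁ ω₂ (g₁.trans g₂).f (g₁.trans g₂).d t)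
      = pI ω₁ ω₂ g₂.f g₂.d := by
    have hpt : EqOn (itg ω₁ ω₂ (g₁.trans g₂).f (g₁.trans g₂).d)
        (fun t => (2:ℝ) • itg ω₁ ω₂ g₂.f g₂.d (2*t-1)) (uIcc (1/2:ℝ) 1) := by
      intro t ht
      rw [uIcc_of_le (by norm_num)] at ht
      rcases eq_or_lt_of_le ht.1 with h2 | h2
      · subst h2
        simp only [itg, GP.trans]
        rw [if_pos le_rfl, if_pos le_rfl]
        have e1' : c01 (2*(1/2:ℝ)) = 1 := by
          rw [show (2:ℝ)*(1/2) = 1 by norm_num]; exact c01_eq zero_le_one le_rfl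
        have e2' : (2:ℝ)*(1/2)-1 = 0 := by norm_num
        rw [e1', e2', g₁.hd1, g₂.hd0]
        simp
      · simp only [itg, GP.trans]
        rw [if_neg (not_le.mpr h2), if_neg (not_le.mpr h2),
          c01_eq (by linarith) (by linarith [ht.2])]
        simp only [Prod.smul_fst, Prod.smul_snd, smul_assoc, smul_add]
    rw [intervalIntegral.integral_congr hpt, intervalIntegral.integral_smul,
      intervalIntegral.integral_comp_mul_sub (fun t => itg ω₁ ω₂ g₂.f g₂.d t) two_ne_zero 1]
    norm_num [smul_smul, pI]
  calc pI ω₁ ω₂ (g₁.trans g₂).f (g₁.trans g₂).d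
      = (∫ t in (0:ℝ)..(1/2), itg ω₁ ω₂ (g₁.trans g₂).f (g₁.trans g₂).d t)
        + ∫ t in (1/2:ℝ)..1, itg ω₁ ω₂ (g₁.trans g₂).f (g₁.trans g₂).d t :=
        (intervalIntegral.integral_add_adjacent_intervals i1 i2).symm
    _ = _ := by rw [e1, e2]

/-- a good path staying in a ball around `q` towards any point of the ball -/
def GP.segTo {q w : ℂ × ℂ} {δ : ℝ} (hδ : Metric.ball q δ ⊆ G)
    (hw : w ∈ Metric.ball q δ) : GP G q w := by
  have h : ∀ t ∈ Icc (0:ℝ) 1, q + t • (w - q) ∈ G := by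
    intro t ht
    apply hδ
    rw [Metric.mem_ball, dist_eq_norm]
    have he : q + t • (w - q) - q = t • (w - q) := by abel
    rw [he, norm_smul]
    calc ‖t‖ * ‖w - q‖ ≤ 1 * ‖w - q‖ := by
          apply mul_le_mul_of_nonneg_right _ (norm_nonneg _)
          rw [Real.norm_eq_abs, abs_of_nonneg ht.1]; exact ht.2
      _ = dist w q := by rw [one_mul, dist_eq_norm]
      _ < δ := hw
  exact (show q + (w - q) = w by abel) ▸ GP.seg q (w - q) h

lemma reach (hG : IsOpen G) (hconn : IsConnected G) {q₀ : ℂ × ℂ} (hq₀ : q₀ ∈ G) :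
    ∀ y ∈ G, Nonempty (GP G q₀ y) := by
  set U : Set (ℂ × ℂ) := {y | y ∈ G ∧ Nonempty (GP G q₀ y)} with hU
  set V : Set (ℂ × ℂ) := {y | y ∈ G ∧ ¬ Nonempty (GP G q₀ y)} with hV
  have hUopen : IsOpen U := by
    rw [Metric.isOpen_iff]
    rintro y ⟨hyG, ⟨g⟩⟩
    obtain ⟨δ, hδpos, hδ⟩ := Metric.isOpen_iff.mp hG y hyG
    refine ⟨δ, hδpos, fun w hw => ⟨hδ hw, ⟨g.trans (GP.segTo hδ hw)⟩⟩⟩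
  have hVopen : IsOpen V := by
    rw [Metric.isOpen_iff]
    rintro y ⟨hyG, hy⟩
    obtain ⟨δ, hδpos, hδ⟩ := Metric.isOpen_iff.mp hG y hyG
    refine ⟨δ, hδpos, fun w hw => ⟨hδ hw, fun ⟨g⟩ => hy ?_⟩⟩
    have hy' : y ∈ Metric.ball w (2*δ) := by
      rw [Metric.mem_ball] at hw ⊢
      rw [dist_comm]
      linarith
    have hball : Metric.ball w (2*δ) ∩ Metric.ball y δ ⊆ G := fun u hu => hδ hu.2
    -- direct segment from w to y stays in ball y δ
    have hseg : ∀ t ∈ Icc (0:ℝ) 1, w + t • (y - w) ∈ Metric.ball y δ := by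
      intro t ht
      have := (convex_ball y δ).add_smul_sub_mem hw (Metric.mem_ball_self hδpos) ht
      exact this
    exact ⟨g.trans ((show w + (y - w) = y by abel) ▸
      GP.seg w (y - w) (fun t ht => hδ (hseg t ht)))⟩
  have hsub : G ⊆ U ∪ V := by
    intro y hy
    by_cases h : Nonempty (GP G q₀ y)
    · exact Or.inl ⟨hy, h⟩
    · exact Or.inr ⟨hy, h⟩
  have hdisj : Disjoint U V := by
    rw [Set.disjoint_left]
    rintro y ⟨_, h1⟩ ⟨_, h2⟩
    exact h2 h1
  have := hconn.isPreconnected.subset_left_of_subset_union hUopen hVopen hdisj hsub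
    ⟨q₀, hq₀, hq₀, ⟨GP.refl q₀ hq₀⟩⟩
  exact fun y hy => (this hy).2

lemma sphi_contS : Continuous sphi :=
  continuous_iff_continuousAt.mpr fun t => (sphi_hasDeriv t).continuousAt

lemma exists_primitive (hG : IsOpen G) (hconn : IsConnected G)
    (hc₁ : ContinuousOn ω₁ G) (hc₂ : ContinuousOn ω₂ G)
    (H : ∀ (r s : ℝ) (p p' : ℝ → ℂ × ℂ), r ≤ s →
        (∀ t ∈ Set.Icc r s, p t ∈ G) →
        (∀ t ∈ Set.Icc r s, HasDerivAt p (p' t) t) →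
        ContinuousOn p' (Set.Icc r s) →
        p r = p s →
        ∫ t in r..s,
          (bmul (ω₁ (p t)) ((p' t).1, 0) + bmul (ω₂ (p t)) ((p' t).2, 0)) = 0) :
    ∃ F : ℂ × ℂ → ℂ × ℂ, ∀ x ∈ G, ∀ y, ∀ g : GP G x y,
      F y = F x + pI ω₁ ω₂ g.f g.d := by
  obtain ⟨q₀, hq₀⟩ := hconn.nonempty
  have hre := reach hG hconn hq₀
  have cp : ∀ y, y ∈ G → GP G q₀ y := fun y h => (hre y h).some
  refine ⟨fun y => if h : y ∈ G then pI ω₁ ω₂ (cp y h).f (cp y h).d else 0, ?_⟩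
  intro x hx y g
  have hy : y ∈ G := by have h1 := g.hmem 1 ⟨zero_le_one, le_rfl⟩; rwa [g.h1] at h1
  simp only [dif_pos hx, dif_pos hy]
  set L := ((cp x hx).trans g).trans (cp y hy).symm with hLdef
  have hclosed : L.f 0 = L.f 1 := by rw [L.h0, L.h1]
  have h0 := H 0 1 L.f L.d zero_le_one L.hmem L.hderiv L.hcont hclosed
  have hzero : pI ω₁ ω₂ L.f L.d = 0 := by
    rw [← h0]
    unfold pI itg
    apply intervalIntegral.integral_congr
    intro t _
    simp [bmul_eq]
  rw [hLdef, pI_trans ω₁ ω₂ hc₁ hc₂, pI_trans ω₁ ω₂ hc₁ hc₂, pI_symm] at hzero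
  exact (add_neg_eq_zero.mp hzero).symm

lemma hasDeriv_primitive (hG : IsOpen G)
    (F : ℂ × ℂ → ℂ × ℂ)
    (hF : ∀ x ∈ G, ∀ y, ∀ g : GP G x y, F y = F x + pI ω₁ ω₂ g.f g.d)
    {q : ℂ × ℂ} (hq : q ∈ G) (emb : ℂ →L[ℂ] ℂ × ℂ) (hn : ∀ c, ‖emb c‖ ≤ ‖c‖)
    (ω : ℂ × ℂ → ℂ × ℂ)
    (hmix : ∀ (c : ℂ) (u : ℂ × ℂ), (emb c).1 • ω₁ u + (emb c).2 • ω₂ u = c • ω u)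
    (hcωG : ContinuousOn ω G) :
    HasDerivAt (fun c : ℂ => F (q + emb c)) (ω q) 0 := by
  obtain ⟨δ, hδpos, hδ⟩ := Metric.isOpen_iff.mp hG q hq
  have hsegmem : ∀ c : ℂ, ‖c‖ < δ → ∀ t ∈ Icc (0:ℝ) 1, q + t • emb c ∈ G := by
    intro c hc t ht
    apply hδ
    rw [Metric.mem_ball, dist_eq_norm]
    have he : q + t • emb c - q = t • emb c := by abel
    rw [he, norm_smul, Real.norm_eq_abs, abs_of_nonneg ht.1]
    calc t * ‖emb c‖ ≤ 1 * ‖c‖ :=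
          mul_le_mul ht.2 (hn c) (norm_nonneg _) zero_le_one
      _ < δ := by rwa [one_mul]
  have key : ∀ c : ℂ, ‖c‖ < δ →
      F (q + emb c) - F q = ∫ t in (0:ℝ)..1, sphi' t • (c • ω (q + sphi t • emb c)) := by
    intro c hc
    have hFe := hF q hq (q + emb c) (GP.seg q (emb c) (hsegmem c hc))
    rw [hFe, add_sub_cancel_left]
    unfold pI
    apply intervalIntegral.integral_congr
    intro t _
    simp only [GP.seg, itg, Prod.smul_fst, Prod.smul_snd, smul_assoc]
    rw [← smul_add, hmix]
  rw [hasDerivAt_iff_isLittleO, Asymptotics.isLittleO_iff]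
  intro C hC
  obtain ⟨δ', hδ'pos, hδ'⟩ := Metric.continuousWithinAt_iff.mp (hcωG q hq) (C/2) (by linarith)
  have hmin : (0:ℝ) < min δ δ' := lt_min hδpos hδ'pos
  filter_upwards [Metric.ball_mem_nhds (0:ℂ) hmin] with c hc
  rw [Metric.mem_ball, dist_zero_right] at hc
  have hcδ : ‖c‖ < δ := lt_of_lt_of_le hc (min_le_left _ _)
  have hcδ' : ‖c‖ < δ' := lt_of_lt_of_le hc (min_le_right _ _)
  have hzero : (fun c : ℂ => F (q + emb c)) 0 = F q := by simp
  simp only [hzero, sub_zero]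
  rw [key c hcδ]
  have hpathcont : ContinuousOn (fun t : ℝ => ω (q + sphi t • emb c)) (Icc 0 1) := by
    apply hcωG.comp
    · exact (continuous_const.add (sphi_contS.smul continuous_const)).continuousOn
    · intro t ht
      exact hsegmem c hcδ (sphi t) (sphi_mem ht)
  have hi1 : IntervalIntegrable (fun t => sphi' t • (c • ω (q + sphi t • emb c)))
      MeasureTheory.volume 0 1 := by
    apply ContinuousOn.intervalIntegrable
    rw [uIcc_of_le zero_le_one]
    exact sphi_cont.continuousOn.smul (hpathcont.const_smul c)
  have hi2 : IntervalIntegrable (fun t => sphi' t • (c • ω q))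
      MeasureTheory.volume 0 1 := by
    apply ContinuousOn.intervalIntegrable
    exact sphi_cont.continuousOn.smul continuousOn_const
  have hconst : c • ω q = ∫ t in (0:ℝ)..1, sphi' t • (c • ω q) := by
    rw [intervalIntegral.integral_smul_const, sphi'_integral, one_smul]
  rw [hconst, ← intervalIntegral.integral_sub hi1 hi2]
  simp only [← smul_sub]
  have hbound : ∀ t ∈ Set.uIoc (0:ℝ) 1,
      ‖sphi' t • (c • (ω (q + sphi t • emb c) - ω q))‖ ≤ C * ‖c‖ := by
    intro t ht
    rw [uIoc_of_le zero_le_one] at ht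
    have htI : t ∈ Icc (0:ℝ) 1 := ⟨le_of_lt ht.1, ht.2⟩
    have hdist : dist (ω (q + sphi t • emb c)) (ω q) < C/2 := by
      apply hδ' (hsegmem c hcδ (sphi t) (sphi_mem htI))
      rw [dist_eq_norm]
      have he : q + sphi t • emb c - q = sphi t • emb c := by abel
      rw [he, norm_smul, Real.norm_eq_abs, abs_of_nonneg (sphi_mem htI).1]
      calc sphi t * ‖emb c‖ ≤ 1 * ‖c‖ :=
            mul_le_mul (sphi_mem htI).2 (hn c) (norm_nonneg _) zero_le_one
        _ < δ' := by rwa [one_mul]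
    rw [norm_smul, norm_smul, Real.norm_eq_abs, abs_of_nonneg (sphi'_nonneg htI)]
    calc sphi' t * (‖c‖ * ‖ω (q + sphi t • emb c) - ω q‖)
        ≤ 2 * (‖c‖ * (C/2)) := by
          apply mul_le_mul (sphi'_le_two htI) _ (by positivity) (by norm_num)
          apply mul_le_mul_of_nonneg_left _ (norm_nonneg c)
          rw [← dist_eq_norm]
          exact le_of_lt hdist
      _ = C * ‖c‖ := by ring
  calc ‖∫ t in (0:ℝ)..1, sphi' t • (c • (ω (q + sphi t • emb c) - ω q))‖
      ≤ C * ‖c‖ * |1 - 0| := intervalIntegral.norm_integral_le_of_norm_le_const hbound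
    _ = C * ‖c‖ := by norm_num

lemma emb_deriv_to_coord₁ (F : ℂ × ℂ → ℂ × ℂ) {q : ℂ × ℂ} {w : ℂ × ℂ}
    (hm : HasDerivAt (fun c : ℂ => F (q + (ContinuousLinearMap.inl ℂ ℂ ℂ) c)) w 0) :
    HasDerivAt (fun z : ℂ => F (z, q.2)) w q.1 := by
  have hin : HasDerivAt (fun z : ℂ => z - q.1) 1 q.1 := by
    simpa using (hasDerivAt_id q.1).sub_const q.1
  have := HasDerivAt.scomp_of_eq q.1 hm hin (by simp)
  rw [one_smul] at this
  refine this.congr_of_eventuallyEq (Filter.Eventually.of_forall fun z => ?_)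
  show F (z, q.2) = F (q + (z - q.1, 0))
  congr 1
  ext <;> simp

lemma emb_deriv_to_coord₂ (F : ℂ × ℂ → ℂ × ℂ) {q : ℂ × ℂ} {w : ℂ × ℂ}
    (hm : HasDerivAt (fun c : ℂ => F (q + (ContinuousLinearMap.inr ℂ ℂ ℂ) c)) w 0) :
    HasDerivAt (fun z : ℂ => F (q.1, z)) w q.2 := by
  have hin : HasDerivAt (fun z : ℂ => z - q.2) 1 q.2 := by
    simpa using (hasDerivAt_id q.2).sub_const q.2
  have := HasDerivAt.scomp_of_eq q.2 hm hin (by simp)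
  rw [one_smul] at this
  refine this.congr_of_eventuallyEq (Filter.Eventually.of_forall fun z => ?_)
  show F (q.1, z) = F (q + (0, z - q.2))
  congr 1
  ext <;> simp

lemma forward_dir (hG : IsOpen G) (hconn : IsConnected G)
    (hc₁ : ContinuousOn ω₁ G) (hc₂ : ContinuousOn ω₂ G)
    (H : ∀ (r s : ℝ) (p p' : ℝ → ℂ × ℂ), r ≤ s →
        (∀ t ∈ Set.Icc r s, p t ∈ G) →
        (∀ t ∈ Set.Icc r s, HasDerivAt p (p' t) t) →
        ContinuousOn p' (Set.Icc r s) →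
        p r = p s →
        ∫ t in r..s,
          (bmul (ω₁ (p t)) ((p' t).1, 0) + bmul (ω₂ (p t)) ((p' t).2, 0)) = 0) :
    ∃ Ω : ℂ × ℂ → ℂ × ℂ, ∀ q ∈ G,
        HasDerivAt (fun z => (Ω (z, q.2)).1) ((ω₁ q).1) q.1 ∧
        HasDerivAt (fun z => (Ω (z, q.2)).2) ((ω₁ q).2) q.1 ∧
        HasDerivAt (fun z => (Ω (q.1, z)).1) ((ω₂ q).1) q.2 ∧
        HasDerivAt (fun z => (Ω (q.1, z)).2) ((ω₂ q).2) q.2 := by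
  obtain ⟨F, hF⟩ := exists_primitive ω₁ ω₂ hG hconn hc₁ hc₂ H
  refine ⟨F, ?_⟩
  intro q hq
  have h1 : HasDerivAt (fun z : ℂ => F (z, q.2)) (ω₁ q) q.1 := by
    apply emb_deriv_to_coord₁ F
    apply hasDeriv_primitive ω₁ ω₂ hG F hF hq (ContinuousLinearMap.inl ℂ ℂ ℂ) _ ω₁ _ hc₁
    · intro c
      simp [Prod.norm_def]
    · intro c u
      simp
  have h2 : HasDerivAt (fun z : ℂ => F (q.1, z)) (ω₂ q) q.2 := by
    apply emb_deriv_to_coord₂ F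
    apply hasDeriv_primitive ω₁ ω₂ hG F hF hq (ContinuousLinearMap.inr ℂ ℂ ℂ) _ ω₂ _ hc₂
    · intro c
      simp [Prod.norm_def]
    · intro c u
      simp
  refine ⟨?_, ?_, ?_, ?_⟩
  · simpa [Function.comp_def] using (ContinuousLinearMap.fst ℂ ℂ ℂ).hasFDerivAt.comp_hasDerivAt q.1 h1
  · simpa [Function.comp_def] using (ContinuousLinearMap.snd ℂ ℂ ℂ).hasFDerivAt.comp_hasDerivAt q.1 h1
  · simpa [Function.comp_def] using (ContinuousLinearMap.fst ℂ ℂ ℂ).hasFDerivAt.comp_hasDerivAt q.2 h2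
  · simpa [Function.comp_def] using (ContinuousLinearMap.snd ℂ ℂ ℂ).hasFDerivAt.comp_hasDerivAt q.2 h2

lemma joint_fderiv (hG : IsOpen G) (hc₁ : ContinuousOn ω₁ G)
    (Ω : ℂ × ℂ → ℂ × ℂ)
    (h1 : ∀ q ∈ G, HasDerivAt (fun z : ℂ => Ω (z, q.2)) (ω₁ q) q.1)
    (h2 : ∀ q ∈ G, HasDerivAt (fun z : ℂ => Ω (q.1, z)) (ω₂ q) q.2)
    {q : ℂ × ℂ} (hq : q ∈ G) :
    HasFDerivAt Ω (((ContinuousLinearMap.fst ℂ ℂ ℂ).smulRight (ω₁ q)) +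
      ((ContinuousLinearMap.snd ℂ ℂ ℂ).smulRight (ω₂ q))) q := by
  rw [hasFDerivAt_iff_isLittleO_nhds_zero, Asymptotics.isLittleO_iff]
  intro C hC
  obtain ⟨δ, hδpos, hδ⟩ := Metric.isOpen_iff.mp hG q hq
  obtain ⟨δ₁, hδ₁pos, hδ₁⟩ := Metric.continuousWithinAt_iff.mp (hc₁ q hq) (C/2) (by linarith)
  set δ₂ := min δ δ₁ with hδ₂def
  have hδ₂pos : 0 < δ₂ := lt_min hδpos hδ₁pos
  have hsnd : ∀ᶠ u : ℂ × ℂ in nhds 0,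
      ‖Ω (q.1, q.2 + u.2) - Ω (q.1, q.2) - u.2 • ω₂ q‖ ≤ C/2 * ‖u.2‖ := by
    have h2' := Asymptotics.isLittleO_iff.mp
      (hasDerivAt_iff_isLittleO_nhds_zero.mp (h2 q hq)) (by linarith : (0:ℝ) < C/2)
    have htd : Filter.Tendsto (fun u : ℂ × ℂ => u.2) (nhds 0) (nhds 0) := by
      exact continuous_snd.tendsto' _ _ rfl
    exact htd.eventually h2'
  filter_upwards [Metric.ball_mem_nhds (0 : ℂ × ℂ) (by positivity : (0:ℝ) < δ₂/2), hsnd]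
    with u hu hu2
  rw [Metric.mem_ball, dist_zero_right] at hu
  have hu1n : ‖u.1‖ ≤ ‖u‖ := norm_fst_le u
  have hu2n : ‖u.2‖ ≤ ‖u‖ := norm_snd_le u
  have hmv : ‖Ω (q.1 + u.1, q.2 + u.2) - Ω (q.1, q.2 + u.2) - u.1 • ω₁ q‖ ≤ C/2 * ‖u.1‖ := by
    have hsub : ∀ z ∈ Metric.ball q.1 (δ₂/2), (z, q.2 + u.2) ∈ G ∩ Metric.ball q δ₁ := by
      intro z hz
      rw [Metric.mem_ball] at hz
      have hd : dist ((z, q.2 + u.2) : ℂ × ℂ) q < δ₂ := by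
        rw [Prod.dist_eq]
        apply max_lt
        · exact lt_of_lt_of_le hz (by linarith)
        · have : dist (q.2 + u.2) q.2 = ‖u.2‖ := by
            rw [dist_eq_norm]; congr 1; abel
          rw [this]
          calc ‖u.2‖ ≤ ‖u‖ := hu2n
            _ < δ₂/2 := hu
            _ ≤ δ₂ := by linarith
      constructor
      · exact hδ (Metric.mem_ball.mpr (lt_of_lt_of_le hd (min_le_left _ _)))
      · exact Metric.mem_ball.mpr (lt_of_lt_of_le hd (min_le_right _ _))
    have hder : ∀ z ∈ Metric.ball q.1 (δ₂/2), HasFDerivWithinAt (fun z : ℂ => Ω (z, q.2 + u.2))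
        ((1 : ℂ →L[ℂ] ℂ).smulRight (ω₁ (z, q.2 + u.2))) (Metric.ball q.1 (δ₂/2)) z := by
      intro z hz
      have hzG := (hsub z hz).1
      have hd := h1 (z, q.2 + u.2) hzG
      exact (hasDerivAt_iff_hasFDerivAt.mp hd).hasFDerivWithinAt
    have hbound : ∀ z ∈ Metric.ball q.1 (δ₂/2),
        ‖((1 : ℂ →L[ℂ] ℂ).smulRight (ω₁ (z, q.2 + u.2))) -
          ((1 : ℂ →L[ℂ] ℂ).smulRight (ω₁ q))‖ ≤ C/2 := by
      intro z hz
      have hzm := hsub z hz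
      have hdist : ‖ω₁ (z, q.2 + u.2) - ω₁ q‖ ≤ C/2 := by
        rw [← dist_eq_norm]
        exact le_of_lt (hδ₁ hzm.1 (Metric.mem_ball.mp hzm.2))
      apply ContinuousLinearMap.opNorm_le_bound _ (by linarith)
      intro w
      rw [ContinuousLinearMap.sub_apply, ContinuousLinearMap.smulRight_apply,
        ContinuousLinearMap.smulRight_apply, ← smul_sub, norm_smul]
      simp only [ContinuousLinearMap.one_apply]
      calc ‖w‖ * ‖ω₁ (z, q.2 + u.2) - ω₁ q‖ ≤ ‖w‖ * (C/2) :=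
            mul_le_mul_of_nonneg_left hdist (norm_nonneg w)
        _ = C/2 * ‖w‖ := by ring
    have hq1mem : q.1 ∈ Metric.ball q.1 (δ₂/2) := Metric.mem_ball_self (by positivity)
    have hq1umem : q.1 + u.1 ∈ Metric.ball q.1 (δ₂/2) := by
      rw [Metric.mem_ball, dist_eq_norm]
      have : q.1 + u.1 - q.1 = u.1 := by abel
      rw [this]
      exact lt_of_le_of_lt hu1n hu
    have := (convex_ball q.1 (δ₂/2)).norm_image_sub_le_of_norm_hasFDerivWithin_le'
      hder hbound hq1mem hq1umem
    simpa [add_sub_cancel_left] using this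
  have hsplit : Ω (q + u) - Ω q -
      (((ContinuousLinearMap.fst ℂ ℂ ℂ).smulRight (ω₁ q)) +
        ((ContinuousLinearMap.snd ℂ ℂ ℂ).smulRight (ω₂ q))) u
      = (Ω (q.1 + u.1, q.2 + u.2) - Ω (q.1, q.2 + u.2) - u.1 • ω₁ q) +
        (Ω (q.1, q.2 + u.2) - Ω (q.1, q.2) - u.2 • ω₂ q) := by
    have hqu : q + u = (q.1 + u.1, q.2 + u.2) := rfl
    have hqq : Ω q = Ω (q.1, q.2) := rfl
    rw [hqu, hqq]
    simp only [ContinuousLinearMap.add_apply, ContinuousLinearMap.smulRight_apply,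
      ContinuousLinearMap.coe_fst', ContinuousLinearMap.coe_snd']
    abel
  rw [hsplit]
  calc ‖(Ω (q.1 + u.1, q.2 + u.2) - Ω (q.1, q.2 + u.2) - u.1 • ω₁ q) +
        (Ω (q.1, q.2 + u.2) - Ω (q.1, q.2) - u.2 • ω₂ q)‖
      ≤ ‖Ω (q.1 + u.1, q.2 + u.2) - Ω (q.1, q.2 + u.2) - u.1 • ω₁ q‖ +
        ‖Ω (q.1, q.2 + u.2) - Ω (q.1, q.2) - u.2 • ω₂ q‖ := norm_add_le _ _
    _ ≤ C/2 * ‖u.1‖ + C/2 * ‖u.2‖ := add_le_add hmv hu2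
    _ ≤ C/2 * ‖u‖ + C/2 * ‖u‖ :=
        add_le_add (mul_le_mul_of_nonneg_left hu1n (by linarith))
          (mul_le_mul_of_nonneg_left hu2n (by linarith))
    _ = C * ‖u‖ := by ring

lemma backward_dir (hG : IsOpen G)
    (hc₁ : ContinuousOn ω₁ G) (hc₂ : ContinuousOn ω₂ G)
    (Ω : ℂ × ℂ → ℂ × ℂ)
    (hΩ : ∀ q ∈ G,
        HasDerivAt (fun z => (Ω (z, q.2)).1) ((ω₁ q).1) q.1 ∧
        HasDerivAt (fun z => (Ω (z, q.2)).2) ((ω₁ q).2) q.1 ∧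
        HasDerivAt (fun z => (Ω (q.1, z)).1) ((ω₂ q).1) q.2 ∧
        HasDerivAt (fun z => (Ω (q.1, z)).2) ((ω₂ q).2) q.2) :
    ∀ (r s : ℝ) (p p' : ℝ → ℂ × ℂ), r ≤ s →
        (∀ t ∈ Set.Icc r s, p t ∈ G) →
        (∀ t ∈ Set.Icc r s, HasDerivAt p (p' t) t) →
        ContinuousOn p' (Set.Icc r s) →
        p r = p s →
        ∫ t in r..s,
          (bmul (ω₁ (p t)) ((p' t).1, 0) + bmul (ω₂ (p t)) ((p' t).2, 0)) = 0 := by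
  have h1 : ∀ q ∈ G, HasDerivAt (fun z : ℂ => Ω (z, q.2)) (ω₁ q) q.1 := by
    intro q hq
    exact HasDerivAt.prodMk ((hΩ q hq).1) ((hΩ q hq).2.1)
  have h2 : ∀ q ∈ G, HasDerivAt (fun z : ℂ => Ω (q.1, z)) (ω₂ q) q.2 := by
    intro q hq
    exact HasDerivAt.prodMk ((hΩ q hq).2.2.1) ((hΩ q hq).2.2.2)
  intro r s p p' hrs hmemG hp hp' hclosed
  have key : ∀ t ∈ uIcc r s, HasDerivAt (fun t => Ω (p t)) (itg ω₁ ω₂ p p' t) t := by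
    rw [uIcc_of_le hrs]
    intro t ht
    have hfd := joint_fderiv ω₁ ω₂ hG hc₁ Ω h1 h2 (hmemG t ht)
    have := (hfd.restrictScalars ℝ).comp_hasDerivAt t (hp t ht)
    simpa [itg, Function.comp_def] using this
  have hint : IntervalIntegrable (itg ω₁ ω₂ p p') MeasureTheory.volume r s := by
    apply ContinuousOn.intervalIntegrable
    rw [uIcc_of_le hrs]
    have hpc : ContinuousOn p (Icc r s) :=
      fun t ht => (hp t ht).continuousAt.continuousWithinAt
    exact ((continuous_fst.comp_continuousOn hp').smul (hc₁.comp hpc hmemG)).add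
      ((continuous_snd.comp_continuousOn hp').smul (hc₂.comp hpc hmemG))
  have hFTC := intervalIntegral.integral_eq_sub_of_hasDerivAt key hint
  calc ∫ t in r..s, (bmul (ω₁ (p t)) ((p' t).1, 0) + bmul (ω₂ (p t)) ((p' t).2, 0))
      = ∫ t in r..s, itg ω₁ ω₂ p p' t := by
        apply intervalIntegral.integral_congr
        intro t _
        simp [bmul_eq, itg]
    _ = Ω (p s) - Ω (p r) := hFTC
    _ = 0 := by rw [hclosed, sub_self]

end

theorem bicomplex_exact_differential_iff_path_independent (G : Set (ℂ × ℂ))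
    (hG : IsOpen G) (hconn : IsConnected G) (ω₁ ω₂ : ℂ × ℂ → ℂ × ℂ)
    (hc₁ : ContinuousOn ω₁ G) (hc₂ : ContinuousOn ω₂ G) :
    (∀ (r s : ℝ) (p p' : ℝ → ℂ × ℂ), r ≤ s →
        (∀ t ∈ Set.Icc r s, p t ∈ G) →
        (∀ t ∈ Set.Icc r s, HasDerivAt p (p' t) t) →
        ContinuousOn p' (Set.Icc r s) →
        p r = p s →
        ∫ t in r..s,
          (bmul (ω₁ (p t)) ((p' t).1, 0) + bmul (ω₂ (p t)) ((p' t).2, 0)) = 0) ↔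
      (∃ Ω : ℂ × ℂ → ℂ × ℂ, ∀ q ∈ G,
        HasDerivAt (fun z => (Ω (z, q.2)).1) ((ω₁ q).1) q.1 ∧
        HasDerivAt (fun z => (Ω (z, q.2)).2) ((ω₁ q).2) q.1 ∧
        HasDerivAt (fun z => (Ω (q.1, z)).1) ((ω₂ q).1) q.2 ∧
        HasDerivAt (fun z => (Ω (q.1, z)).2) ((ω₂ q).2) q.2) := by
  constructor
  · intro H
    exact forward_dir ω₁ ω₂ hG hconn hc₁ hc₂ H
  · rintro ⟨Ω, hΩ⟩
    exact backward_dir ω₁ ω₂ hG hc₁ hc₂ Ω hΩ
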